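/- Let $X$ be a Banach space and $f : [a,b] \to X$ differentiable with $\|f'(t)\| \le M$ for $t \in [a,b]$. Then the Simpson rule error satisfies $\left\| \int_a^b f(t)\,dt - \frac{b-a}{3}\left[\frac{f(a)+f(b)}{2} + 2 f\left(\frac{a+b}{2}\right)\right] \right\| \le \frac{5}{36}(b-a)^2 M$. -/

import Mathlib

open MeasureTheory intervalIntegral

private lemma twoPoint {X : Type*} [NormedAddCommGroup X] [NormedSpace ℝ X] [CompleteSpace X]
    {u v c : ℝ} (huc : u ≤ c) (hcv : c ≤ v) {f f' : ℝ → X}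
    (hderiv : ∀ t ∈ Set.Icc u v, HasDerivAt f (f' t) t)
    {M : ℝ} (hM : ∀ t ∈ Set.Icc u v, ‖f' t‖ ≤ M) :
    ‖(∫ t in u..v, f t) - (c - u) • f u - (v - c) • f v‖ ≤
      M * (((c - u) ^ 2 + (v - c) ^ 2) / 2) := by
  have huv : u ≤ v := huc.trans hcv
  have hM0 : 0 ≤ M := (norm_nonneg _).trans (hM u ⟨le_refl u, huv⟩)
  -- measurability of f' on (u, v]
  have hmeas : AEStronglyMeasurable f' (volume.restrict (Set.Ioc u v)) := by
    refine (aestronglyMeasurable_deriv f _).congr ?_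
    filter_upwards [ae_restrict_mem measurableSet_Ioc] with t ht
    exact (hderiv t (Set.Ioc_subset_Icc_self ht)).deriv
  have hbound : ∀ᵐ t ∂volume.restrict (Set.Ioc u v), ‖f' t‖ ≤ M := by
    filter_upwards [ae_restrict_mem measurableSet_Ioc] with t ht
    exact hM t (Set.Ioc_subset_Icc_self ht)
  have hcont : ContinuousOn f (Set.Icc u v) := fun t ht =>
    (hderiv t ht).continuousAt.continuousWithinAt
  have hfint : IntervalIntegrable f volume u v :=
    hcont.intervalIntegrable_of_Icc huv
  have hsint : IntervalIntegrable (fun t => (t - c) • f' t) volume u v := by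
    rw [intervalIntegrable_iff_integrableOn_Ioc_of_le huv]
    refine Integrable.mono' (integrable_const ((v - u) * M)) ?_ ?_
    · exact ((continuous_id.sub continuous_const).aestronglyMeasurable).smul hmeas
    · filter_upwards [ae_restrict_mem measurableSet_Ioc] with t ht
      rw [norm_smul]
      have h1 : abs (t - c) ≤ v - u := by
        rw [abs_le]; constructor <;> [linarith [ht.1]; linarith [ht.2]]
      have := hM t (Set.Ioc_subset_Icc_self ht)
      exact mul_le_mul h1 this (norm_nonneg _) (by linarith)
  have hg : ∀ t ∈ Set.uIcc u v,
      HasDerivAt (fun s => (s - c) • f s) (f t + (t - c) • f' t) t := by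
    intro t ht
    rw [Set.uIcc_of_le huv] at ht
    have h1 : HasDerivAt (fun s : ℝ => s - c) 1 t := (hasDerivAt_id t).sub_const c
    have := h1.smul (hderiv t ht)
    refine this.congr_deriv ?_
    simp [add_comm]
  have hFTC := intervalIntegral.integral_eq_sub_of_hasDerivAt hg (hfint.add hsint)
  rw [intervalIntegral.integral_add hfint hsint] at hFTC
  have key : (∫ t in u..v, f t) - (c - u) • f u - (v - c) • f v
      = -∫ t in u..v, (t - c) • f' t := by
    linear_combination (norm := module) hFTC
  rw [key, norm_neg]
  have hb : ‖∫ t in u..v, (t - c) • f' t‖ ≤ |∫ t in u..v, M * abs (t - c)| := by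
    apply intervalIntegral.norm_integral_le_abs_of_norm_le
    · rw [Set.uIoc_of_le huv]
      filter_upwards [ae_restrict_mem measurableSet_Ioc] with t ht
      rw [norm_smul, mul_comm]
      exact mul_le_mul_of_nonneg_right (hM t (Set.Ioc_subset_Icc_self ht))
        (abs_nonneg _)
    · exact (continuous_const.mul ((continuous_id.sub continuous_const).abs)).intervalIntegrable u v
  refine hb.trans ?_
  have habs1 : IntervalIntegrable (fun t => M * abs (t - c)) volume u c :=
    (continuous_const.mul ((continuous_id.sub continuous_const).abs)).intervalIntegrable u c
  have habs2 : IntervalIntegrable (fun t => M * abs (t - c)) volume c v :=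
    (continuous_const.mul ((continuous_id.sub continuous_const).abs)).intervalIntegrable c v
  have hsplit : (∫ t in u..v, M * abs (t - c)) = (∫ t in u..c, M * abs (t - c)) + ∫ t in c..v, M * abs (t - c) :=
    (intervalIntegral.integral_add_adjacent_intervals habs1 habs2).symm
  have h1 : (∫ t in u..c, M * abs (t - c)) = M * ((c - u) ^ 2 / 2) := by
    have : (∫ t in u..c, M * abs (t - c)) = ∫ t in u..c, M * (c - t) := by
      apply intervalIntegral.integral_congr
      intro t ht
      rw [Set.uIcc_of_le huc] at ht
      show M * |t - c| = M * (c - t)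
      rw [abs_of_nonpos (by linarith [ht.2])]
      ring
    rw [this, intervalIntegral.integral_const_mul]
    have : (∫ t in u..c, (c - t)) = (c - u) ^ 2 / 2 := by
      rw [intervalIntegral.integral_sub (intervalIntegrable_const) intervalIntegrable_id,
        intervalIntegral.integral_const, integral_id]
      simp; ring
    rw [this]
  have h2 : (∫ t in c..v, M * abs (t - c)) = M * ((v - c) ^ 2 / 2) := by
    have : (∫ t in c..v, M * abs (t - c)) = ∫ t in c..v, M * (t - c) := by
      apply intervalIntegral.integral_congr
      intro t ht
      rw [Set.uIcc_of_le hcv] at ht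
      show M * |t - c| = M * (t - c)
      rw [abs_of_nonneg (by linarith [ht.1])]
    rw [this, intervalIntegral.integral_const_mul]
    have : (∫ t in c..v, (t - c)) = (v - c) ^ 2 / 2 := by
      rw [intervalIntegral.integral_sub intervalIntegrable_id (intervalIntegrable_const),
        intervalIntegral.integral_const, integral_id]
      simp; ring
    rw [this]
  rw [hsplit, h1, h2, abs_of_nonneg (by positivity)]
  nlinarith [sq_nonneg (c - u), sq_nonneg (v - c)]

theorem stmt18 {X : Type*} [NormedAddCommGroup X] [NormedSpace ℝ X] [CompleteSpace X]
    {a b : ℝ} (hab : a < b) {f f' : ℝ → X}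
    (hderiv : ∀ t ∈ Set.Icc a b, HasDerivAt f (f' t) t)
    {M : ℝ} (hM : ∀ t ∈ Set.Icc a b, ‖f' t‖ ≤ M) :
    ‖(∫ t in a..b, f t) - ((b - a) / 3) • ((2 : ℝ)⁻¹ • (f a + f b) + (2 : ℝ) • f ((a + b) / 2))‖ ≤
      (5 / 36) * (b - a) ^ 2 * M := by
  set m := (a + b) / 2 with hm
  have ham : a ≤ m := by rw [hm]; linarith
  have hmb : m ≤ b := by rw [hm]; linarith
  have hsub1 : Set.Icc a m ⊆ Set.Icc a b := Set.Icc_subset_Icc le_rfl hmb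
  have hsub2 : Set.Icc m b ⊆ Set.Icc a b := Set.Icc_subset_Icc ham le_rfl
  set h := b - a with hh
  have h1 : ‖(∫ t in a..m, f t) - ((a + h / 6) - a) • f a - (m - (a + h / 6)) • f m‖ ≤
      M * ((((a + h / 6) - a) ^ 2 + (m - (a + h / 6)) ^ 2) / 2) := by
    apply twoPoint (by rw [hh]; linarith) (by rw [hm, hh]; linarith)
      (fun t ht => hderiv t (hsub1 ht)) (fun t ht => hM t (hsub1 ht))
  have h2 : ‖(∫ t in m..b, f t) - ((b - h / 6) - m) • f m - (b - (b - h / 6)) • f b‖ ≤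
      M * ((((b - h / 6) - m) ^ 2 + (b - (b - h / 6)) ^ 2) / 2) := by
    apply twoPoint (by rw [hm, hh]; linarith) (by rw [hh]; linarith)
      (fun t ht => hderiv t (hsub2 ht)) (fun t ht => hM t (hsub2 ht))
  have hcont : ContinuousOn f (Set.Icc a b) := fun t ht =>
    (hderiv t ht).continuousAt.continuousWithinAt
  have hfi1 : IntervalIntegrable f volume a m :=
    (hcont.mono hsub1).intervalIntegrable_of_Icc ham
  have hfi2 : IntervalIntegrable f volume m b :=
    (hcont.mono hsub2).intervalIntegrable_of_Icc hmb
  have hsplit : (∫ t in a..b, f t) = (∫ t in a..m, f t) + ∫ t in m..b, f t :=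
    (intervalIntegral.integral_add_adjacent_intervals hfi1 hfi2).symm
  have key : (∫ t in a..b, f t) - ((b - a) / 3) • ((2 : ℝ)⁻¹ • (f a + f b) + (2 : ℝ) • f m)
      = ((∫ t in a..m, f t) - ((a + h / 6) - a) • f a - (m - (a + h / 6)) • f m)
        + ((∫ t in m..b, f t) - ((b - h / 6) - m) • f m - (b - (b - h / 6)) • f b) := by
    rw [hsplit]
    have e1 : m - (a + h / 6) = h / 3 := by rw [hm, hh]; ring
    have e2 : (b - h / 6) - m = h / 3 := by rw [hm, hh]; ring
    have e3 : (a + h / 6) - a = h / 6 := by ring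
    have e4 : b - (b - h / 6) = h / 6 := by ring
    rw [e1, e2, e3, e4, ← hh]
    match_scalars <;> ring
  rw [key]
  calc _ ≤ _ := norm_add_le _ _
    _ ≤ M * ((((a + h / 6) - a) ^ 2 + (m - (a + h / 6)) ^ 2) / 2)
        + M * ((((b - h / 6) - m) ^ 2 + (b - (b - h / 6)) ^ 2) / 2) := add_le_add h1 h2
    _ = (5 / 36) * (b - a) ^ 2 * M := by rw [hm, hh]; ring
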